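/- arXiv:2406.01251 — 2 statements merged into one kernel-verified Lean document; each statement's English description precedes it below -/
import Mathlib

section
/- Let e : ℝ → ℝ³ be differentiable, and suppose that on an interval I, for every t ∈ I with e(t) ≠ 0, the derivative satisfies ė_i(t) = r_i(t) − σ_i·Δ_i(t), where σ_i > 0, e_i(t)·Δ_i(t) ≥ 0, and |r_i(t)| < σ_i·|Δ_i(t)| for all i. Then the Lyapunov function V(t) = ½‖e(t)‖² has strictly negative derivative at every t ∈ I with e(t) ≠ 0; in particular t ↦ ‖e(t)‖ is nonincreasing on any subinterval of I where e stays nonzero. -/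
/-- If along an interval `I` the error dynamics satisfy
`ė_i = r_i − σ_i Δ_i` with `σ_i > 0`, `e_i Δ_i ≥ 0` and `|r_i| < σ_i |Δ_i|`
whenever `e(t) ≠ 0`, then the Lyapunov function `V = ½‖e‖²` has strictly
negative derivative at every such point, and `‖e‖` is nonincreasing on any
subinterval of `I` on which `e` stays nonzero. -/
theorem reconfigured_error_dynamics_lyapunov
    (e : ℝ → EuclideanSpace ℝ (Fin 3))
    (r Δ : ℝ → Fin 3 → ℝ) (σ : Fin 3 → ℝ)
    (I : Set ℝ) (hI : I.OrdConnected)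
    (hdiff : Differentiable ℝ e)
    (hσ : ∀ i, 0 < σ i)
    (hode : ∀ t ∈ I, e t ≠ 0 →
      HasDerivAt e (WithLp.toLp 2 (fun i => r t i - σ i * Δ t i : Fin 3 → ℝ) :
        EuclideanSpace ℝ (Fin 3)) t ∧
      (∀ i, 0 ≤ e t i * Δ t i) ∧ (∀ i, |r t i| < σ i * |Δ t i|)) :
    (∀ t ∈ I, e t ≠ 0 → deriv (fun s => (1 / 2 : ℝ) * ‖e s‖ ^ 2) t < 0) ∧
    (∀ J : Set ℝ, J ⊆ I → J.OrdConnected → (∀ t ∈ J, e t ≠ 0) →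
      AntitoneOn (fun t => ‖e t‖) J) := by
  have key : ∀ t ∈ I, e t ≠ 0 →
      deriv (fun s => (1 / 2 : ℝ) * ‖e s‖ ^ 2) t < 0 := by
    intro t ht hne
    obtain ⟨hD, hpos, hr⟩ := hode t ht hne
    set v : EuclideanSpace ℝ (Fin 3) :=
      (WithLp.toLp 2 (fun i => r t i - σ i * Δ t i : Fin 3 → ℝ) : EuclideanSpace ℝ (Fin 3))
    have hinner : HasDerivAt (fun s => @inner ℝ _ _ (e s) (e s))
        (@inner ℝ _ _ (e t) v + @inner ℝ _ _ v (e t)) t := hD.inner ℝ hD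
    have hsym : @inner ℝ _ _ (e t) v + @inner ℝ _ _ v (e t)
        = 2 * @inner ℝ _ _ (e t) v := by
      rw [real_inner_comm v (e t)]; ring
    have hV : HasDerivAt (fun s => (1 / 2 : ℝ) * ‖e s‖ ^ 2)
        (@inner ℝ _ _ (e t) v) t := by
      have := hinner.const_mul (1 / 2 : ℝ)
      rw [hsym] at this
      have h2 : (1 / 2 : ℝ) * (2 * @inner ℝ _ _ (e t) v)
          = @inner ℝ _ _ (e t) v := by ring
      rw [h2] at this
      have heq : (fun s => (1 / 2 : ℝ) * ‖e s‖ ^ 2)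
          = fun s => (1 / 2 : ℝ) * @inner ℝ _ _ (e s) (e s) := by
        funext s; rw [real_inner_self_eq_norm_sq]
      rw [heq]; exact this
    rw [hV.deriv]
    have hval : @inner ℝ _ _ (e t) v = ∑ i, e t i * (r t i - σ i * Δ t i) := by
      simp [v, PiLp.inner_apply, RCLike.inner_apply, mul_comm]
    rw [hval]
    -- termwise estimate
    have hterm : ∀ i : Fin 3, e t i * (r t i - σ i * Δ t i) ≤ 0 := by
      intro i
      have h1 : e t i * r t i ≤ |e t i| * |r t i| := by
        calc e t i * r t i ≤ |e t i * r t i| := le_abs_self _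
        _ = |e t i| * |r t i| := abs_mul _ _
      have h2 : σ i * (|e t i| * |Δ t i|) = σ i * (e t i * Δ t i) := by
        rw [← abs_mul, abs_of_nonneg (hpos i)]
      have h3 : |e t i| * |r t i| ≤ |e t i| * (σ i * |Δ t i|) :=
        mul_le_mul_of_nonneg_left (hr i).le (abs_nonneg _)
      nlinarith [abs_nonneg (e t i)]
    have hstrict : ∃ i : Fin 3, e t i * (r t i - σ i * Δ t i) < 0 := by
      have : ∃ i, e t i ≠ 0 := by
        by_contra h
        push_neg at h
        exact hne (by ext i; simpa using h i)
      obtain ⟨i, hi⟩ := this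
      refine ⟨i, ?_⟩
      have habs : 0 < |e t i| := abs_pos.mpr hi
      obtain ⟨hD', hpos, hr⟩ := hode t ht hne
      have h1 : e t i * r t i ≤ |e t i| * |r t i| := by
        calc e t i * r t i ≤ |e t i * r t i| := le_abs_self _
        _ = |e t i| * |r t i| := abs_mul _ _
      have h2 : σ i * (|e t i| * |Δ t i|) = σ i * (e t i * Δ t i) := by
        rw [← abs_mul, abs_of_nonneg (hpos i)]
      have h3 : |e t i| * |r t i| < |e t i| * (σ i * |Δ t i|) :=
        (mul_lt_mul_iff_right₀ habs).mpr (hr i)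
      nlinarith
    obtain ⟨i, hi⟩ := hstrict
    calc ∑ j, e t j * (r t j - σ j * Δ t j)
        < ∑ _j : Fin 3, (0 : ℝ) := by
          refine Finset.sum_lt_sum (fun j _ => hterm j) ⟨i, Finset.mem_univ i, hi⟩
      _ = 0 := by simp
  refine ⟨key, ?_⟩
  intro J hJI hJord hJne
  have hconv : Convex ℝ J := convex_iff_ordConnected.mpr hJord
  have hcont : ContinuousOn (fun s => (1 / 2 : ℝ) * ‖e s‖ ^ 2) J := by
    exact (continuous_const.mul (hdiff.continuous.norm.pow 2)).continuousOn
  have hanti : StrictAntiOn (fun s => (1 / 2 : ℝ) * ‖e s‖ ^ 2) J := by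
    apply strictAntiOn_of_deriv_neg hconv hcont
    intro x hx
    have hxJ : x ∈ J := interior_subset hx
    exact key x (hJI hxJ) (hJne x hxJ)
  intro a ha b hb hab
  rcases eq_or_lt_of_le hab with h | h
  · simp [h]
  · have := (hanti ha hb h).le
    have hsq : ‖e b‖ ^ 2 ≤ ‖e a‖ ^ 2 := by linarith
    exact (pow_le_pow_iff_left₀ (norm_nonneg _) (norm_nonneg _) two_ne_zero).mp hsq
end

section
/- Let K_ω, τ, τ_a > 0 and ν > 0 be real numbers, and suppose the radicand R = 2K_ω²τ²ν² + K_ω² − 4K_ω τ_a τ²ν⁴ − 2K_ω τ_a ν² + 2K_ω τ ν² + 2τ_a²τ²ν⁶ + τ_a²ν⁴ − 2τ_a τ ν⁴ + τ²ν⁴ + 2ν² is nonnegative. Define K_Ω = ( −ν² + ν·√R + τ_a τ ν⁴ − K_ω τ ν² ) / K_ω. Then K_Ω satisfies the bandwidth equation 2 K_Ω² K_ω² − [τ_a τ ν⁴ − ν² − K_ω τ ν² + K_Ω K_ω]² − [−(τ_a + τ) ν³ + K_ω ν]² = 0. -/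
/-- The analytical outer-loop gain update law: the gain
`K_Ω = (−ν² + ν√R + τ_aτν⁴ − K_ωτν²)/K_ω`, with `R` the displayed radicand,
satisfies the bandwidth equation
`2K_Ω²K_ω² − [τ_aτν⁴ − ν² − K_ωτν² + K_ΩK_ω]² − [−(τ_a+τ)ν³ + K_ων]² = 0`. -/
theorem outer_loop_gain_update_law
    (Kω τ τa ν : ℝ) (hKω : 0 < Kω) (hτ : 0 < τ) (hτa : 0 < τa) (hν : 0 < ν)
    (R : ℝ)
    (hR : R = 2 * Kω ^ 2 * τ ^ 2 * ν ^ 2 + Kω ^ 2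
      - 4 * Kω * τa * τ ^ 2 * ν ^ 4 - 2 * Kω * τa * ν ^ 2
      + 2 * Kω * τ * ν ^ 2 + 2 * τa ^ 2 * τ ^ 2 * ν ^ 6 + τa ^ 2 * ν ^ 4
      - 2 * τa * τ * ν ^ 4 + τ ^ 2 * ν ^ 4 + 2 * ν ^ 2)
    (hRnn : 0 ≤ R)
    (KΩ : ℝ)
    (hKΩ : KΩ = (-ν ^ 2 + ν * Real.sqrt R + τa * τ * ν ^ 4
      - Kω * τ * ν ^ 2) / Kω) :
    2 * KΩ ^ 2 * Kω ^ 2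
      - (τa * τ * ν ^ 4 - ν ^ 2 - Kω * τ * ν ^ 2 + KΩ * Kω) ^ 2
      - (-(τa + τ) * ν ^ 3 + Kω * ν) ^ 2 = 0 := by
  have hs : Real.sqrt R ^ 2 = R := Real.sq_sqrt hRnn
  have hx : KΩ * Kω = -ν ^ 2 + ν * Real.sqrt R + τa * τ * ν ^ 4
      - Kω * τ * ν ^ 2 := by
    rw [hKΩ]; field_simp
  have h2 : 2 * KΩ ^ 2 * Kω ^ 2 = 2 * (KΩ * Kω) ^ 2 := by ring
  rw [h2, hx]
  nlinarith [hs, hR, sq_nonneg ν]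
end
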